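/- Let G be a group and σ an automorphism of G with σ(g)g⁻¹ ∈ Γ_{j+1}(G) for all g ∈ G. Then for every i ≥ 1, σ(g)g⁻¹ ∈ Γ_{i+j}(G) for all g ∈ Γ_i(G). -/

import Mathlib

open Subgroup
open scoped commutatorElement

theorem lcs_succ_eq_commutator {G : Type*} [Group G] (n : ℕ) :
    (⊤ : Subgroup G).lowerCentralSeries (n + 1) = ⁅(⊤ : Subgroup G).lowerCentralSeries n, (⊤ : Subgroup G)⁆ := rfl

/-- `⁅Γ_m, Γ_n⁆ ≤ Γ_{m+n+1}` (0-based indexing). -/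
theorem lcs_commutator_le_aux {G : Type*} [Group G] (n m : ℕ) :
    ⁅(⊤ : Subgroup G).lowerCentralSeries m, (⊤ : Subgroup G).lowerCentralSeries n⁆ ≤ (⊤ : Subgroup G).lowerCentralSeries (m + n + 1) := by
  induction n generalizing m with
  | zero =>
      rw [Subgroup.lowerCentralSeries_zero]
      exact le_of_eq (lcs_succ_eq_commutator m).symm
  | succ n ih =>
      set N := (⊤ : Subgroup G).lowerCentralSeries (m + (n + 1) + 1) with hN
      set π := (QuotientGroup.mk' N : G →* G ⧸ N) with hπ
      have key : ∀ H K : Subgroup G, ⁅H, K⁆ ≤ N ↔ ⁅H.map π, K.map π⁆ = ⊥ := by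
        intro H K
        rw [← Subgroup.map_commutator, Subgroup.map_eq_bot_iff, QuotientGroup.ker_mk']
      rw [lcs_succ_eq_commutator n, Subgroup.commutator_comm, key, Subgroup.map_commutator]
      apply Subgroup.commutator_commutator_eq_bot_of_rotate
      · -- ⁅⁅⊤, Γ_m⁆, Γ_n⁆ = ⊥
        rw [← Subgroup.map_commutator, ← Subgroup.map_commutator,
          Subgroup.map_eq_bot_iff, QuotientGroup.ker_mk']
        calc ⁅⁅(⊤ : Subgroup G), (⊤ : Subgroup G).lowerCentralSeries m⁆, (⊤ : Subgroup G).lowerCentralSeries n⁆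
            = ⁅(⊤ : Subgroup G).lowerCentralSeries (m + 1), (⊤ : Subgroup G).lowerCentralSeries n⁆ := by
              rw [Subgroup.commutator_comm (⊤ : Subgroup G), ← lcs_succ_eq_commutator]
          _ ≤ (⊤ : Subgroup G).lowerCentralSeries ((m + 1) + n + 1) := ih _
          _ ≤ N := le_of_eq (by rw [hN]; ring_nf)
      · -- ⁅⁅Γ_m, Γ_n⁆, ⊤⁆ = ⊥
        rw [← Subgroup.map_commutator, ← Subgroup.map_commutator,
          Subgroup.map_eq_bot_iff, QuotientGroup.ker_mk']
        calc ⁅⁅(⊤ : Subgroup G).lowerCentralSeries m, (⊤ : Subgroup G).lowerCentralSeries n⁆, (⊤ : Subgroup G)⁆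
            ≤ ⁅(⊤ : Subgroup G).lowerCentralSeries (m + n + 1), (⊤ : Subgroup G)⁆ :=
              Subgroup.commutator_mono (ih m) le_rfl
          _ = (⊤ : Subgroup G).lowerCentralSeries ((m + n + 1) + 1) := (lcs_succ_eq_commutator _).symm
          _ ≤ N := le_of_eq (by rw [hN]; ring_nf)

/-- If `σ ∈ Aut G` satisfies `σ(g)g⁻¹ ∈ Γ_{j+1}(G)` for all `g ∈ G`, then
`σ(g)g⁻¹ ∈ Γ_{i+j}(G)` for all `g ∈ Γ_i(G)` (0-based: Lean index `i` is `Γ_{i+1}`,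
so the conclusion reads: `g ∈ (⊤ : Subgroup G).lowerCentralSeries i → σ g * g⁻¹ ∈
(⊤ : Subgroup G).lowerCentralSeries (i + j)`). -/
theorem andreadakis_action_on_lcs {G : Type*} [Group G] (j : ℕ) (σ : MulAut G)
    (hσ : ∀ g : G, σ g * g⁻¹ ∈ (⊤ : Subgroup G).lowerCentralSeries j) :
    ∀ i : ℕ, ∀ g ∈ (⊤ : Subgroup G).lowerCentralSeries i, σ g * g⁻¹ ∈ (⊤ : Subgroup G).lowerCentralSeries (i + j) := by
  intro i
  induction i with
  | zero => intro g _; simpa using hσ g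
  | succ i ih =>
      set N := (⊤ : Subgroup G).lowerCentralSeries (i + 1 + j) with hNdef
      have hNnormal : N.Normal := Subgroup.lowerCentralSeries_normal ⊤ (i + 1 + j)
      intro g hg
      rw [lcs_succ_eq_commutator, Subgroup.commutator_def] at hg
      induction hg using Subgroup.closure_induction with
      | mem z hz =>
          obtain ⟨x, hx, y, -, rfl⟩ := hz
          show σ ⁅x, y⁆ * ⁅x, y⁆⁻¹ ∈ N
          set π := (QuotientGroup.mk' N : G →* G ⧸ N) with hπ
          have hmem : ∀ w : G, w ∈ N ↔ π w = 1 := fun w =>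
            (QuotientGroup.eq_one_iff w).symm
          set a := σ x * x⁻¹ with ha
          set b := σ y * y⁻¹ with hb
          have haM : a ∈ (⊤ : Subgroup G).lowerCentralSeries (i + j) := ih x hx
          have hbM : b ∈ (⊤ : Subgroup G).lowerCentralSeries j := hσ y
          -- π a is central in G ⧸ N
          have hAc : ∀ q : G ⧸ N, Commute (π a) q := by
            intro q
            obtain ⟨z, rfl⟩ := QuotientGroup.mk'_surjective N q
            rw [← commutatorElement_eq_one_iff_commute]
            show π ⁅a, z⁆ = 1
            rw [← hmem]
            have : ⁅a, z⁆ ∈ ⁅(⊤ : Subgroup G).lowerCentralSeries (i + j), (⊤ : Subgroup G)⁆ :=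
              Subgroup.commutator_mem_commutator haM (Subgroup.mem_top z)
            rw [← lcs_succ_eq_commutator] at this
            exact Subgroup.lowerCentralSeries_antitone (S := ⊤) (by omega) this
          -- π b commutes with π x
          have hbx : Commute (π x) (π b) := by
            rw [← commutatorElement_eq_one_iff_commute, ← map_commutatorElement, ← hmem]
            have : ⁅x, b⁆ ∈ ⁅(⊤ : Subgroup G).lowerCentralSeries i, (⊤ : Subgroup G).lowerCentralSeries j⁆ :=
              Subgroup.commutator_mem_commutator hx hbM
            exact (lcs_commutator_le_aux j i).trans
              (Subgroup.lowerCentralSeries_antitone (S := ⊤) (by omega)) this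
          -- π b commutes with π ⁅x, y⁆
          have hbc : Commute (π ⁅x, y⁆) (π b) := by
            rw [← commutatorElement_eq_one_iff_commute, ← map_commutatorElement, ← hmem]
            have hxy : ⁅x, y⁆ ∈ (⊤ : Subgroup G).lowerCentralSeries (i + 1) := by
              rw [lcs_succ_eq_commutator]
              exact Subgroup.commutator_mem_commutator hx (Subgroup.mem_top y)
            have : ⁅⁅x, y⁆, b⁆ ∈ ⁅(⊤ : Subgroup G).lowerCentralSeries (i + 1), (⊤ : Subgroup G).lowerCentralSeries j⁆ :=
              Subgroup.commutator_mem_commutator hxy hbM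
            exact (lcs_commutator_le_aux j (i + 1)).trans
              (Subgroup.lowerCentralSeries_antitone (S := ⊤) (by omega)) this
          -- reduce to an identity in the quotient
          rw [hmem, map_mul, map_inv, mul_inv_eq_one]
          simp only [map_commutatorElement]
          have hsx : π (σ x) = π a * π x := by rw [← map_mul, ha, inv_mul_cancel_right]
          have hsy : π (σ y) = π b * π y := by rw [← map_mul, hb, inv_mul_cancel_right]
          rw [hsx, hsy]
          set X := π x
          set Y := π y
          set A := π a
          set B := π b
          have hbc' : Commute X B := hbx
          have hcc' : Commute ⁅X, Y⁆ B := hbc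
          calc ⁅A * X, B * Y⁆
              = A * (X * (B * Y) * X⁻¹) * A⁻¹ * (B * Y)⁻¹ := by
                rw [commutatorElement_def]; group
            _ = (X * (B * Y) * X⁻¹) * A * A⁻¹ * (B * Y)⁻¹ := by
                rw [(hAc (X * (B * Y) * X⁻¹)).eq]
            _ = (X * B) * (Y * X⁻¹ * Y⁻¹ * B⁻¹) := by group
            _ = (B * X) * (Y * X⁻¹ * Y⁻¹ * B⁻¹) := by rw [hbc'.eq]
            _ = B * ⁅X, Y⁆ * B⁻¹ := by rw [commutatorElement_def]; group
            _ = ⁅X, Y⁆ * B * B⁻¹ := by rw [← hcc'.eq]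
            _ = ⁅X, Y⁆ := by group
      | one => simpa using one_mem _
      | mul p q _ _ hp hq =>
          have : σ (p * q) * (p * q)⁻¹ = (σ p) * (σ q * q⁻¹) * (σ p)⁻¹ * (σ p * p⁻¹) := by
            simp only [map_mul]; group
          rw [this]
          exact mul_mem (hNnormal.conj_mem _ hq _) hp
      | inv p _ hp =>
          have : σ p⁻¹ * (p⁻¹)⁻¹ = (σ p)⁻¹ * (σ p * p⁻¹)⁻¹ * (σ p) := by
            simp only [map_inv]; group
          rw [this]
          simpa using hNnormal.conj_mem _ (inv_mem hp) (σ p)⁻¹
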